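/- Let m ≥ 2. Every complex root t of every m-ary partition polynomial p_m(n,t) satisfies |t| < 4^{1/m}; in particular all such roots lie strictly inside the circle of radius 2 centered at the origin. -/

import Mathlib

noncomputable def pm (m : ℕ) : ℕ → Polynomial ℤ
  | 0 => 1
  | n + 1 =>
      Polynomial.X * pm m n +
        if h : 2 ≤ m ∧ m ∣ (n + 1) then pm m ((n + 1) / m) else 0
decreasing_by
  · exact Nat.lt_succ_self n
  · exact Nat.div_lt_self (Nat.succ_pos n) (by omega)

lemma pm_zero (m : ℕ) : pm m 0 = 1 := by rw [pm]

lemma aeval_pm_not_dvd {m : ℕ} (t : ℂ) {n : ℕ} (h : ¬ m ∣ (n+1)) :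
    Polynomial.aeval t (pm m (n+1)) = t * Polynomial.aeval t (pm m n) := by
  rw [pm]
  rw [dif_neg (by tauto)]
  simp

lemma aeval_pm_dvd {m : ℕ} (hm : 2 ≤ m) (t : ℂ) {n : ℕ} (h : m ∣ (n+1)) :
    Polynomial.aeval t (pm m (n+1)) =
      t * Polynomial.aeval t (pm m n) + Polynomial.aeval t (pm m ((n+1)/m)) := by
  rw [pm]
  rw [dif_pos ⟨hm, h⟩]
  simp

lemma aeval_pm_pow {m : ℕ} (hm : 2 ≤ m) (t : ℂ) (k : ℕ) :
    ∀ i, i < m → Polynomial.aeval t (pm m (m*k+i)) = t^i * Polynomial.aeval t (pm m (m*k)) := by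
  intro i
  induction i with
  | zero => intro _; simp
  | succ i ih =>
    intro hi
    have hnd : ¬ m ∣ (m*k+i+1) := by
      intro hd
      have : m ∣ (i+1) := by
        have := (Nat.dvd_add_right ⟨k, rfl⟩).mp (by rwa [show m*k+i+1 = m*k+(i+1) by omega] at hd)
        exact this
      have := Nat.le_of_dvd (by omega) this
      omega
    have : Polynomial.aeval t (pm m (m*k+i+1)) = t * Polynomial.aeval t (pm m (m*k+i)) :=
      aeval_pm_not_dvd t hnd
    rw [show m*k+(i+1) = m*k+i+1 by omega, this, ih (by omega), pow_succ]
    ring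

lemma aeval_pm_mod {m : ℕ} (hm : 2 ≤ m) (t : ℂ) (n : ℕ) :
    Polynomial.aeval t (pm m n) = t^(n % m) * Polynomial.aeval t (pm m (m * (n/m))) := by
  conv_lhs => rw [← Nat.div_add_mod n m]
  exact aeval_pm_pow hm t (n/m) (n % m) (Nat.mod_lt _ (by omega))

lemma Q_rec {m : ℕ} (hm : 2 ≤ m) (t : ℂ) (j : ℕ) :
    Polynomial.aeval t (pm m (m*(j+1))) =
      t^m * Polynomial.aeval t (pm m (m*j)) +
        t^((j+1) % m) * Polynomial.aeval t (pm m (m*((j+1)/m))) := by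
  have hidx : m*(j+1) = (m*j + (m-1)) + 1 := by
    rw [Nat.mul_succ]; omega
  have hdvd : m ∣ (m*j + (m-1)) + 1 := by
    rw [← hidx]; exact ⟨j+1, rfl⟩
  have hdiv : ((m*j + (m-1)) + 1) / m = j + 1 := by
    rw [← hidx]; exact Nat.mul_div_cancel_left _ (by omega)
  rw [hidx, aeval_pm_dvd hm t hdvd, hdiv,
    aeval_pm_pow hm t j (m-1) (by omega),
    aeval_pm_mod hm t (j+1)]
  have : t * (t^(m-1) * Polynomial.aeval t (pm m (m*j)))
      = t^m * Polynomial.aeval t (pm m (m*j)) := by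
    rw [← mul_assoc, ← pow_succ']
    congr 2
    omega
  rw [this]

lemma key_bound {m : ℕ} (hm : 2 ≤ m) (t : ℂ) (hσ : 4 ≤ ‖t‖ ^ m) :
    ∀ j a, a ≤ j →
      (‖t‖ ^ m - Real.sqrt (‖t‖ ^ m))^(j - a)
          * ‖Polynomial.aeval t (pm m (m*a))‖
        ≤ ‖Polynomial.aeval t (pm m (m*j))‖ := by
  set r := ‖t‖ with hr
  set σ := r ^ m with hσdef
  set s := Real.sqrt σ with hs
  set c := σ - s with hc
  have hr0 : 0 ≤ r := norm_nonneg t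
  have hr1 : 1 ≤ r := by
    by_contra hlt
    push_neg at hlt
    have : r ^ m ≤ 1 := pow_le_one₀ hr0 hlt.le
    linarith
  have hσ0 : 0 ≤ σ := by positivity
  have hs2 : 2 ≤ s := by
    have h4 : Real.sqrt 4 ≤ s := Real.sqrt_le_sqrt hσ
    have : Real.sqrt 4 = 2 := by
      rw [show (4:ℝ) = 2^2 by norm_num, Real.sqrt_sq (by norm_num)]
    linarith
  have hss : s ^ 2 = σ := Real.sq_sqrt hσ0
  have hsc : s ≤ c := by nlinarith
  have hc2 : 2 ≤ c := by linarith
  have hc0 : 0 ≤ c := by linarith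
  intro j
  induction j with
  | zero =>
    intro a ha
    interval_cases a
    simp
  | succ j IH =>
    -- core step
    have hkj : (j+1)/m ≤ j := by
      have h1 : (j+1)/m ≤ (j+1)/2 := Nat.div_le_div_left hm (by norm_num)
      omega
    set k := (j+1)/m with hk
    set ν := (j+1) % m with hν
    have hchain := IH k hkj
    have harith : r ^ ν ≤ s * c ^ (j - k) := by
      have h1 : r ^ ν ≤ s ^ (j - k + 1) := by
        have hnat : 2 * ν ≤ m * (j - k + 1) := by
          have hdm : m * k + ν = j + 1 := Nat.div_add_mod (j+1) m
          have he : m * (j - k + 1) + m * k = m * (j + 1) := by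
            rw [← Nat.mul_add]; congr 1; omega
          have hge : 2 * (j+1) ≤ m * (j+1) := Nat.mul_le_mul_right (j+1) hm
          omega
        have hsq : (r ^ ν) ^ 2 ≤ (s ^ (j - k + 1)) ^ 2 := by
          have e1 : (r^ν)^2 = r^(2*ν) := by rw [← pow_mul, mul_comm]
          have e2 : (s^(j-k+1))^2 = r^(m*(j-k+1)) := by
            rw [← pow_mul, mul_comm, pow_mul, hss, hσdef, ← pow_mul]
          rw [e1, e2]
          exact pow_le_pow_right₀ hr1 hnat
        have hs0 : 0 ≤ s ^ (j - k + 1) := by positivity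
        have hrv0 : 0 ≤ r ^ ν := by positivity
        nlinarith [hsq]
      calc r ^ ν ≤ s ^ (j - k + 1) := h1
        _ = s * s ^ (j - k) := by rw [pow_succ']
        _ ≤ s * c ^ (j - k) := by
            apply mul_le_mul_of_nonneg_left _ (by linarith)
            exact pow_le_pow_left₀ (by linarith) hsc _
    have hcore : c * ‖Polynomial.aeval t (pm m (m*j))‖
        ≤ ‖Polynomial.aeval t (pm m (m*(j+1)))‖ := by
      have hrec := Q_rec hm t j
      set Pj := Polynomial.aeval t (pm m (m*j)) with hPj
      set Pk := Polynomial.aeval t (pm m (m*k)) with hPk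
      set Q := Polynomial.aeval t (pm m (m*(j+1))) with hQ
      have heq : t^m * Pj = Q - t^ν * Pk := by rw [hrec]; ring
      have htri : ‖t^m * Pj‖ ≤ ‖Q‖ + ‖t^ν * Pk‖ := by
        rw [heq]
        simpa [sub_eq_add_neg, norm_neg] using norm_add_le Q (-(t^ν * Pk))
      have h2 : ‖t^m * Pj‖ = σ * ‖Pj‖ := by
        rw [norm_mul, norm_pow]
      have h3 : ‖t^ν * Pk‖ = r^ν * ‖Pk‖ := by
        rw [norm_mul, norm_pow]
      have h4 : r^ν * ‖Pk‖ ≤ s * ‖Pj‖ := by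
        calc r^ν * ‖Pk‖ ≤ (s * c^(j-k)) * ‖Pk‖ :=
              mul_le_mul_of_nonneg_right harith (norm_nonneg _)
          _ = s * (c^(j-k) * ‖Pk‖) := by ring
          _ ≤ s * ‖Pj‖ := mul_le_mul_of_nonneg_left hchain (by linarith)
      have := htri
      rw [h2, h3] at this
      have : σ * ‖Pj‖ - s * ‖Pj‖ ≤ ‖Q‖ := by linarith
      calc c * ‖Pj‖ = σ * ‖Pj‖ - s * ‖Pj‖ := by ring
        _ ≤ ‖Q‖ := this
    intro a ha
    rcases Nat.lt_or_ge a (j+1) with hlt | hge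
    · have haj : a ≤ j := by omega
      have hd : j + 1 - a = (j - a) + 1 := by omega
      rw [hd, pow_succ']
      calc c * c^(j-a) * ‖Polynomial.aeval t (pm m (m*a))‖
          = c * (c^(j-a) * ‖Polynomial.aeval t (pm m (m*a))‖) := by ring
        _ ≤ c * ‖Polynomial.aeval t (pm m (m*j))‖ :=
            mul_le_mul_of_nonneg_left (IH a haj) hc0
        _ ≤ _ := hcore
    · have : a = j + 1 := by omega
      subst this
      simp

/-- Every complex root of p_m(n,t) has absolute value less than 4^(1/m) ≤ 2. -/
theorem pm_roots_bound (m : ℕ) (hm : 2 ≤ m) (n : ℕ) (t : ℂ)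
    (h : (Polynomial.aeval t) (pm m n) = 0) :
    ‖t‖ < (4 : ℝ) ^ ((1 : ℝ) / (m : ℝ)) ∧ ‖t‖ < 2 := by
  have hm0 : (m:ℝ) ≠ 0 := Nat.cast_ne_zero.2 (by omega)
  have hmain : ‖t‖ < (4 : ℝ) ^ ((1 : ℝ) / (m : ℝ)) := by
    by_contra hge
    push_neg at hge
    set r := ‖t‖ with hr
    have h40 : (0:ℝ) ≤ (4 : ℝ) ^ ((1 : ℝ) / (m : ℝ)) := Real.rpow_nonneg (by norm_num) _
    have hσ : 4 ≤ r ^ m := by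
      have h1 : ((4 : ℝ) ^ ((1 : ℝ) / (m : ℝ))) ^ m ≤ r ^ m :=
        pow_le_pow_left₀ h40 hge m
      have h2 : ((4 : ℝ) ^ ((1 : ℝ) / (m : ℝ))) ^ m = 4 := by
        rw [← Real.rpow_natCast ((4:ℝ) ^ ((1:ℝ)/(m:ℝ))) m, ← Real.rpow_mul (by norm_num),
          one_div, inv_mul_cancel₀ hm0, Real.rpow_one]
      linarith [h2 ▸ h1]
    have hr1 : 1 ≤ r := by
      by_contra hlt
      push_neg at hlt
      have : r ^ m ≤ 1 := pow_le_one₀ (norm_nonneg t) hlt.le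
      linarith
    -- q(n/m) ≠ 0
    have hkey := key_bound hm t hσ (n/m) 0 (Nat.zero_le _)
    have hP0 : ‖Polynomial.aeval t (pm m (m*0))‖ = 1 := by
      simp [pm_zero]
    rw [hP0, mul_one] at hkey
    have hc2 : (2:ℝ) ≤ r ^ m - Real.sqrt (r ^ m) := by
      have hσ0 : (0:ℝ) ≤ r ^ m := by positivity
      have hs2 : 2 ≤ Real.sqrt (r^m) := by
        have h4 : Real.sqrt 4 ≤ Real.sqrt (r^m) := Real.sqrt_le_sqrt hσ
        have : Real.sqrt 4 = 2 := by
          rw [show (4:ℝ) = 2^2 by norm_num, Real.sqrt_sq (by norm_num)]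
        linarith
      have hss : Real.sqrt (r^m) ^ 2 = r ^ m := Real.sq_sqrt hσ0
      nlinarith
    have hpos : 0 < ‖Polynomial.aeval t (pm m (m*(n/m)))‖ := by
      calc (0:ℝ) < (r ^ m - Real.sqrt (r ^ m)) ^ (n/m - 0) := by positivity
        _ ≤ _ := hkey
    have hmod := aeval_pm_mod hm t n
    rw [h] at hmod
    have : (0:ℝ) = r ^ (n % m) * ‖Polynomial.aeval t (pm m (m*(n/m)))‖ := by
      calc (0:ℝ) = ‖(0:ℂ)‖ := by simp
        _ = _ := by rw [hmod, norm_mul, norm_pow]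
    have hrpos : 0 < r ^ (n % m) := by positivity
    nlinarith
  refine ⟨hmain, lt_of_lt_of_le hmain ?_⟩
  have h1 : (4 : ℝ) ^ ((1 : ℝ) / (m : ℝ)) ≤ (4 : ℝ) ^ ((1 : ℝ) / 2) := by
    apply Real.rpow_le_rpow_of_exponent_le (by norm_num)
    have : (2:ℝ) ≤ (m:ℝ) := by exact_mod_cast hm
    rw [div_le_div_iff₀ (by positivity) (by norm_num)]
    linarith
  have h2 : (4 : ℝ) ^ ((1 : ℝ) / 2) = 2 := by
    rw [show (4:ℝ) = 2^(2:ℕ) by norm_num, ← Real.rpow_natCast 2 2, ← Real.rpow_mul (by norm_num)]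
    norm_num
  linarith
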